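/- If a finite multiset of k-tuples admits a nice c-coloring, then it admits a nice partial c-coloring in which each of the c colors is used on at most k+1 tuples; moreover, this partial coloring can be chosen to be a restriction of the original coloring (every tuple colored in the partial coloring keeps its original color), and from each color class of the original coloring one prescribed tuple can be required to remain colored. -/
import Mathlib


/-- `f` is a *nice (total) `c`-coloring* of the multiset `T` of tuples: the color
classes `f j` sum to `T`, and for each color `j` and every element `i` appearing in
some tuple of `T` there is a tuple of color `j` not containing `i`. -/
def NiceColoring (c : ℕ) (T : Multiset (Finset ℕ+))
    (f : Fin c → Multiset (Finset ℕ+)) : Prop :=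
  (∑ j, f j) = T ∧
  ∀ j : Fin c, ∀ i : ℕ+, (∃ t ∈ T, i ∈ t) → ∃ t ∈ f j, i ∉ t

/-- `f` is a *nice partial `c`-coloring* of the multiset `T` of tuples: the color
classes `f j` form disjoint submultisets of `T` (some tuples may stay uncolored), and
for each color `j` and every element `i` appearing in some tuple of `T` there is a
tuple of color `j` not containing `i`. -/
def NicePartialColoring (c : ℕ) (T : Multiset (Finset ℕ+))
    (f : Fin c → Multiset (Finset ℕ+)) : Prop :=
  (∑ j, f j) ≤ T ∧
  ∀ j : Fin c, ∀ i : ℕ+, (∃ t ∈ T, i ∈ t) → ∃ t ∈ f j, i ∉ t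

/-- If a finite multiset of `k`-tuples admits a nice `c`-coloring `f`, then it admits
a nice partial `c`-coloring `g` using each color on at most `k + 1` tuples, which is
a restriction of `f` (each color class of `g` is a submultiset of the corresponding
color class of `f`); moreover one prescribed tuple `s j` from each color class of `f`
can be required to remain colored. -/
theorem nice_partial_coloring_of_nice_coloring
    (k c : ℕ) (T : Multiset (Finset ℕ+)) (hT : ∀ t ∈ T, t.card = k)
    (f : Fin c → Multiset (Finset ℕ+)) (hf : NiceColoring c T f)
    (s : Fin c → Finset ℕ+) (hs : ∀ j, s j ∈ f j) :
    ∃ g : Fin c → Multiset (Finset ℕ+),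
      (∀ j, g j ≤ f j) ∧
      (∀ j, Multiset.card (g j) ≤ k + 1) ∧
      (∀ j, s j ∈ g j) ∧
      NicePartialColoring c T g := by
  obtain ⟨hsum, hnice⟩ := hf
  -- each s j is in T
  have hsT : ∀ j, s j ∈ T := by
    intro j
    rw [← hsum]
    exact Multiset.mem_of_le (Finset.single_le_sum (f := f) (fun _ _ => bot_le)
      (Finset.mem_univ j)) (hs j)
  -- choose witnesses
  have hw : ∀ j : Fin c, ∀ i : ℕ+, i ∈ s j → ∃ t ∈ f j, i ∉ t := by
    intro j i hi
    exact hnice j i ⟨s j, hsT j, hi⟩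
  choose w hw1 hw2 using hw
  set m : Fin c → Multiset (Finset ℕ+) :=
    fun j => (s j ::ₘ (s j).attach.val.map (fun i => w j i.1 i.2)) with hm
  have hle : ∀ j, (m j).dedup ≤ f j := by
    intro j
    rw [Multiset.le_iff_count]
    intro a
    rw [Multiset.count_dedup]
    split
    · next ha =>
      have haf : a ∈ f j := by
        rw [hm] at ha
        simp only [Multiset.mem_cons, Multiset.mem_map] at ha
        rcases ha with rfl | ⟨i, _, rfl⟩
        · exact hs j
        · exact hw1 j i.1 i.2
      exact Multiset.one_le_count_iff_mem.mpr haf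
    · exact Nat.zero_le _
  refine ⟨fun j => (m j).dedup, hle, ?_, ?_, ?_, ?_⟩
  · intro j
    calc Multiset.card (m j).dedup ≤ Multiset.card (m j) :=
          Multiset.card_le_card (Multiset.dedup_le _)
      _ = (s j).card + 1 := by
          rw [hm]; rw [Multiset.card_cons, Multiset.card_map]; exact congrArg (· + 1) Finset.card_attach
      _ = k + 1 := by rw [hT _ (hsT j)]
  · intro j
    rw [Multiset.mem_dedup, hm]
    exact Multiset.mem_cons_self _ _
  · -- sum ≤ T
    rw [← hsum]
    exact Finset.sum_le_sum (fun j _ => hle j)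
  · intro j i hi
    by_cases his : i ∈ s j
    · refine ⟨w j i his, ?_, hw2 j i his⟩
      rw [Multiset.mem_dedup, hm]
      refine Multiset.mem_cons_of_mem (Multiset.mem_map.mpr ⟨⟨i, his⟩, Multiset.mem_attach _ _, rfl⟩)
    · exact ⟨s j, by rw [Multiset.mem_dedup, hm]; exact Multiset.mem_cons_self _ _, his⟩
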